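/- The Hessian of A(y) = (y₁⁴+y₂⁴+y₃⁴) + 2∑_{i≠j} y_i³y_j + 3∑_{i<j} y_i²y_j² + 4(y₁²y₂y₃+y₁y₂²y₃+y₁y₂y₃²) is positive definite at every (y₁,y₂,y₃) ≠ (0,0,0). -/

import Mathlib

noncomputable def qd1 (f : ℝ → ℝ → ℝ → ℝ) : ℝ → ℝ → ℝ → ℝ :=
  fun x y z => deriv (fun t => f t y z) x
noncomputable def qd2 (f : ℝ → ℝ → ℝ → ℝ) : ℝ → ℝ → ℝ → ℝ :=
  fun x y z => deriv (fun t => f x t z) y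
noncomputable def qd3 (f : ℝ → ℝ → ℝ → ℝ) : ℝ → ℝ → ℝ → ℝ :=
  fun x y z => deriv (fun t => f x y t) z

private lemma deriv_poly4 (c0 c1 c2 c3 c4 x : ℝ) :
    deriv (fun t : ℝ => c0 + c1 * t + c2 * t ^ 2 + c3 * t ^ 3 + c4 * t ^ 4) x
      = c1 + 2 * c2 * x + 3 * c3 * x ^ 2 + 4 * c4 * x ^ 3 := by
  have h : HasDerivAt (fun t : ℝ => c0 + c1 * t + c2 * t ^ 2 + c3 * t ^ 3 + c4 * t ^ 4)
      (c1 + 2 * c2 * x + 3 * c3 * x ^ 2 + 4 * c4 * x ^ 3) x := by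
    have h0 := ((((hasDerivAt_const x c0).add ((hasDerivAt_id' x).const_mul c1)).add
      ((hasDerivAt_pow 2 x).const_mul c2)).add ((hasDerivAt_pow 3 x).const_mul c3)).add
      ((hasDerivAt_pow 4 x).const_mul c4)
    exact h0.congr_deriv (by push_cast; ring)
  exact h.deriv

theorem stmt_19 (A : ℝ → ℝ → ℝ → ℝ)
    (hA : A = fun y₁ y₂ y₃ =>
      (y₁ ^ 4 + y₂ ^ 4 + y₃ ^ 4) +
        2 * (y₁ ^ 3 * y₂ + y₁ ^ 3 * y₃ + y₂ ^ 3 * y₁ + y₂ ^ 3 * y₃ + y₃ ^ 3 * y₁ + y₃ ^ 3 * y₂) +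
        3 * (y₁ ^ 2 * y₂ ^ 2 + y₁ ^ 2 * y₃ ^ 2 + y₂ ^ 2 * y₃ ^ 2) +
        4 * (y₁ ^ 2 * y₂ * y₃ + y₁ * y₂ ^ 2 * y₃ + y₁ * y₂ * y₃ ^ 2)) :
    ∀ y₁ y₂ y₃ : ℝ, (y₁, y₂, y₃) ≠ (0, 0, 0) →
      (!![qd1 (qd1 A) y₁ y₂ y₃, qd1 (qd2 A) y₁ y₂ y₃, qd1 (qd3 A) y₁ y₂ y₃;
          qd2 (qd1 A) y₁ y₂ y₃, qd2 (qd2 A) y₁ y₂ y₃, qd2 (qd3 A) y₁ y₂ y₃;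
          qd3 (qd1 A) y₁ y₂ y₃, qd3 (qd2 A) y₁ y₂ y₃, qd3 (qd3 A) y₁ y₂ y₃] :
          Matrix (Fin 3) (Fin 3) ℝ).PosDef := by
  have h1 : ∀ a b c : ℝ, qd1 A a b c = 2*c ^ 3 + 4*b*c ^ 2 + 4*b ^ 2*c + 2*b ^ 3 + 6*a*c ^ 2 + 8*a*b*c + 6*a*b ^ 2 + 6*a ^ 2*c + 6*a ^ 2*b + 4*a ^ 3 := by
    intro a b c
    have e : (fun t : ℝ => A t b c) = (fun t : ℝ => (c ^ 4 + 2*b*c ^ 3 + 3*b ^ 2*c ^ 2 + 2*b ^ 3*c + b ^ 4) + (2*c ^ 3 + 4*b*c ^ 2 + 4*b ^ 2*c + 2*b ^ 3) * t + (3*c ^ 2 + 4*b*c + 3*b ^ 2) * t ^ 2 + (2*c + 2*b) * t ^ 3 + (1) * t ^ 4) := by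
      funext t; rw [hA]; ring
    rw [qd1, e, deriv_poly4]; ring
  have h2 : ∀ a b c : ℝ, qd2 A a b c = 2*c ^ 3 + 6*b*c ^ 2 + 6*b ^ 2*c + 4*b ^ 3 + 4*a*c ^ 2 + 8*a*b*c + 6*a*b ^ 2 + 4*a ^ 2*c + 6*a ^ 2*b + 2*a ^ 3 := by
    intro a b c
    have e : (fun t : ℝ => A a t c) = (fun t : ℝ => (c ^ 4 + 2*a*c ^ 3 + 3*a ^ 2*c ^ 2 + 2*a ^ 3*c + a ^ 4) + (2*c ^ 3 + 4*a*c ^ 2 + 4*a ^ 2*c + 2*a ^ 3) * t + (3*c ^ 2 + 4*a*c + 3*a ^ 2) * t ^ 2 + (2*c + 2*a) * t ^ 3 + (1) * t ^ 4) := by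
      funext t; rw [hA]; ring
    rw [qd2, e, deriv_poly4]; ring
  have h3 : ∀ a b c : ℝ, qd3 A a b c = 4*c ^ 3 + 6*b*c ^ 2 + 6*b ^ 2*c + 2*b ^ 3 + 6*a*c ^ 2 + 8*a*b*c + 4*a*b ^ 2 + 6*a ^ 2*c + 4*a ^ 2*b + 2*a ^ 3 := by
    intro a b c
    have e : (fun t : ℝ => A a b t) = (fun t : ℝ => (b ^ 4 + 2*a*b ^ 3 + 3*a ^ 2*b ^ 2 + 2*a ^ 3*b + a ^ 4) + (2*b ^ 3 + 4*a*b ^ 2 + 4*a ^ 2*b + 2*a ^ 3) * t + (3*b ^ 2 + 4*a*b + 3*a ^ 2) * t ^ 2 + (2*b + 2*a) * t ^ 3 + (1) * t ^ 4) := by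
      funext t; rw [hA]; ring
    rw [qd3, e, deriv_poly4]; ring
  have e11 : ∀ a b c : ℝ, qd1 (qd1 A) a b c = 6*c ^ 2 + 8*b*c + 6*b ^ 2 + 12*a*c + 12*a*b + 12*a ^ 2 := by
    intro a b c
    have e : (fun t : ℝ => qd1 A t b c) = (fun t : ℝ => (2*c ^ 3 + 4*b*c ^ 2 + 4*b ^ 2*c + 2*b ^ 3) + (6*c ^ 2 + 8*b*c + 6*b ^ 2) * t + (6*c + 6*b) * t ^ 2 + (4) * t ^ 3 + (0 : ℝ) * t ^ 4) := by
      funext t; rw [h1]; ring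
    rw [qd1, e, deriv_poly4]; ring
  have e12 : ∀ a b c : ℝ, qd1 (qd2 A) a b c = 4*c ^ 2 + 8*b*c + 6*b ^ 2 + 8*a*c + 12*a*b + 6*a ^ 2 := by
    intro a b c
    have e : (fun t : ℝ => qd2 A t b c) = (fun t : ℝ => (2*c ^ 3 + 6*b*c ^ 2 + 6*b ^ 2*c + 4*b ^ 3) + (4*c ^ 2 + 8*b*c + 6*b ^ 2) * t + (4*c + 6*b) * t ^ 2 + (2) * t ^ 3 + (0 : ℝ) * t ^ 4) := by
      funext t; rw [h2]; ring
    rw [qd1, e, deriv_poly4]; ring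
  have e13 : ∀ a b c : ℝ, qd1 (qd3 A) a b c = 6*c ^ 2 + 8*b*c + 4*b ^ 2 + 12*a*c + 8*a*b + 6*a ^ 2 := by
    intro a b c
    have e : (fun t : ℝ => qd3 A t b c) = (fun t : ℝ => (4*c ^ 3 + 6*b*c ^ 2 + 6*b ^ 2*c + 2*b ^ 3) + (6*c ^ 2 + 8*b*c + 4*b ^ 2) * t + (6*c + 4*b) * t ^ 2 + (2) * t ^ 3 + (0 : ℝ) * t ^ 4) := by
      funext t; rw [h3]; ring
    rw [qd1, e, deriv_poly4]; ring
  have e21 : ∀ a b c : ℝ, qd2 (qd1 A) a b c = 4*c ^ 2 + 8*b*c + 6*b ^ 2 + 8*a*c + 12*a*b + 6*a ^ 2 := by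
    intro a b c
    have e : (fun t : ℝ => qd1 A a t c) = (fun t : ℝ => (2*c ^ 3 + 6*a*c ^ 2 + 6*a ^ 2*c + 4*a ^ 3) + (4*c ^ 2 + 8*a*c + 6*a ^ 2) * t + (4*c + 6*a) * t ^ 2 + (2) * t ^ 3 + (0 : ℝ) * t ^ 4) := by
      funext t; rw [h1]; ring
    rw [qd2, e, deriv_poly4]; ring
  have e22 : ∀ a b c : ℝ, qd2 (qd2 A) a b c = 6*c ^ 2 + 12*b*c + 12*b ^ 2 + 8*a*c + 12*a*b + 6*a ^ 2 := by
    intro a b c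
    have e : (fun t : ℝ => qd2 A a t c) = (fun t : ℝ => (2*c ^ 3 + 4*a*c ^ 2 + 4*a ^ 2*c + 2*a ^ 3) + (6*c ^ 2 + 8*a*c + 6*a ^ 2) * t + (6*c + 6*a) * t ^ 2 + (4) * t ^ 3 + (0 : ℝ) * t ^ 4) := by
      funext t; rw [h2]; ring
    rw [qd2, e, deriv_poly4]; ring
  have e23 : ∀ a b c : ℝ, qd2 (qd3 A) a b c = 6*c ^ 2 + 12*b*c + 6*b ^ 2 + 8*a*c + 8*a*b + 4*a ^ 2 := by
    intro a b c
    have e : (fun t : ℝ => qd3 A a t c) = (fun t : ℝ => (4*c ^ 3 + 6*a*c ^ 2 + 6*a ^ 2*c + 2*a ^ 3) + (6*c ^ 2 + 8*a*c + 4*a ^ 2) * t + (6*c + 4*a) * t ^ 2 + (2) * t ^ 3 + (0 : ℝ) * t ^ 4) := by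
      funext t; rw [h3]; ring
    rw [qd2, e, deriv_poly4]; ring
  have e31 : ∀ a b c : ℝ, qd3 (qd1 A) a b c = 6*c ^ 2 + 8*b*c + 4*b ^ 2 + 12*a*c + 8*a*b + 6*a ^ 2 := by
    intro a b c
    have e : (fun t : ℝ => qd1 A a b t) = (fun t : ℝ => (2*b ^ 3 + 6*a*b ^ 2 + 6*a ^ 2*b + 4*a ^ 3) + (4*b ^ 2 + 8*a*b + 6*a ^ 2) * t + (4*b + 6*a) * t ^ 2 + (2) * t ^ 3 + (0 : ℝ) * t ^ 4) := by
      funext t; rw [h1]; ring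
    rw [qd3, e, deriv_poly4]; ring
  have e32 : ∀ a b c : ℝ, qd3 (qd2 A) a b c = 6*c ^ 2 + 12*b*c + 6*b ^ 2 + 8*a*c + 8*a*b + 4*a ^ 2 := by
    intro a b c
    have e : (fun t : ℝ => qd2 A a b t) = (fun t : ℝ => (4*b ^ 3 + 6*a*b ^ 2 + 6*a ^ 2*b + 2*a ^ 3) + (6*b ^ 2 + 8*a*b + 4*a ^ 2) * t + (6*b + 4*a) * t ^ 2 + (2) * t ^ 3 + (0 : ℝ) * t ^ 4) := by
      funext t; rw [h2]; ring
    rw [qd3, e, deriv_poly4]; ring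
  have e33 : ∀ a b c : ℝ, qd3 (qd3 A) a b c = 12*c ^ 2 + 12*b*c + 6*b ^ 2 + 12*a*c + 8*a*b + 6*a ^ 2 := by
    intro a b c
    have e : (fun t : ℝ => qd3 A a b t) = (fun t : ℝ => (2*b ^ 3 + 4*a*b ^ 2 + 4*a ^ 2*b + 2*a ^ 3) + (6*b ^ 2 + 8*a*b + 6*a ^ 2) * t + (6*b + 6*a) * t ^ 2 + (4) * t ^ 3 + (0 : ℝ) * t ^ 4) := by
      funext t; rw [h3]; ring
    rw [qd3, e, deriv_poly4]; ring
  intro y₁ y₂ y₃ hne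
  rw [e11 y₁ y₂ y₃, e12 y₁ y₂ y₃, e13 y₁ y₂ y₃, e21 y₁ y₂ y₃, e22 y₁ y₂ y₃, e23 y₁ y₂ y₃,
    e31 y₁ y₂ y₃, e32 y₁ y₂ y₃, e33 y₁ y₂ y₃]
  have hy : y₁ ≠ 0 ∨ y₂ ≠ 0 ∨ y₃ ≠ 0 := by
    by_contra h
    push_neg at h
    exact hne (by rw [h.1, h.2.1, h.2.2])
  have hypos : 0 < y₁ ^ 2 + y₂ ^ 2 + y₃ ^ 2 := by
    rcases hy with h | h | h <;>
      nlinarith [mul_self_pos.mpr h, sq_nonneg y₁, sq_nonneg y₂, sq_nonneg y₃]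
  refine Matrix.PosDef.of_dotProduct_mulVec_pos ?_ ?_
  · ext i j
    fin_cases i <;> fin_cases j <;> simp [Matrix.conjTranspose_apply]
  · intro x hx
    have hx' : x 0 ≠ 0 ∨ x 1 ≠ 0 ∨ x 2 ≠ 0 := by
      by_contra h
      push_neg at h
      apply hx
      ext i
      fin_cases i <;> simp [h.1, h.2.1, h.2.2]
    have hxpos : 0 < x 0 ^ 2 + x 1 ^ 2 + x 2 ^ 2 := by
      rcases hx' with h | h | h <;>
        nlinarith [mul_self_pos.mpr h, sq_nonneg (x 0), sq_nonneg (x 1), sq_nonneg (x 2)]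
    simp [Matrix.mulVec, dotProduct, Fin.sum_univ_three, Matrix.cons_val_zero,
      Matrix.cons_val_one, Matrix.head_cons]
    nlinarith [mul_pos hxpos hypos,
      mul_nonneg (le_of_lt hxpos) (sq_nonneg (y₁ + y₂ + y₃)),
      mul_nonneg (sq_nonneg (x 0 + x 1 + x 2)) (le_of_lt hypos),
      sq_nonneg (x 0 * y₁ + x 1 * y₂ + x 2 * y₃ + (x 0 + x 1 + x 2) * (y₁ + y₂ + y₃)),
      sq_nonneg ((x 0 + x 1 + x 2) * (y₁ + y₂ + y₃))]
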